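/- Let ρ > 0, ε > 0, and let (x_ε,y_ε,λ_ε,z_ε) ∈ 𝒳×𝒴×Λ×𝒴 be an ε-optimal solution of the penalized min–max–min problem with parameter ρ. Then Φ(x_ε) ≤ Φ_ρ* + 2ε + δ_ρ(x_ε) and f(x_ε,y_ε,λ_ε) ≥ Φ* − 2ε − δ_ρ(x_ε). -/

import Mathlib

open Set Filter Topology

/-- Lemma 3.3, first part: bounds on `Φ(x_ε)` and `f(x_ε,y_ε,λ_ε)` at an ε-optimal
solution of the penalized min–max–min problem. -/
theorem eps_optimal_value_bounds
    {dx dy dl : ℕ}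
    (Xset : Set (EuclideanSpace ℝ (Fin dx)))
    (Yset : Set (EuclideanSpace ℝ (Fin dy)))
    (Lam : Set (EuclideanSpace ℝ (Fin dl)))
    (hXne : Xset.Nonempty) (hXcv : Convex ℝ Xset) (hXcp : IsCompact Xset)
    (hYne : Yset.Nonempty) (hYcv : Convex ℝ Yset) (hYcp : IsCompact Yset)
    (hLne : Lam.Nonempty) (hLcv : Convex ℝ Lam) (hLcp : IsCompact Lam)
    (fbar : EuclideanSpace ℝ (Fin dx) → EuclideanSpace ℝ (Fin dy) → ℝ)
    (Lfbar : ℝ)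
    (hfbarC1 : ContDiff ℝ 1
      (fun p : EuclideanSpace ℝ (Fin dx) × EuclideanSpace ℝ (Fin dy) => fbar p.1 p.2))
    (hfbarLip : ∀ x x' y y',
      ‖gradient (fun x0 => fbar x0 y) x - gradient (fun x0 => fbar x0 y') x'‖ ^ 2 +
        ‖gradient (fun y0 => fbar x y0) y - gradient (fun y0 => fbar x' y0) y'‖ ^ 2 ≤
        Lfbar ^ 2 * (‖x - x'‖ ^ 2 + ‖y - y'‖ ^ 2))
    (A : Matrix (Fin dl) (Fin dx) ℝ) (B : Matrix (Fin dl) (Fin dy) ℝ)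
    (cvec : EuclideanSpace ℝ (Fin dl))
    (f : EuclideanSpace ℝ (Fin dx) → EuclideanSpace ℝ (Fin dy) →
      EuclideanSpace ℝ (Fin dl) → ℝ)
    (hfdef : ∀ x y l, f x y l =
      fbar x y + ∑ i, l i * (A.mulVec (fun j => x j) i + B.mulVec (fun j => y j) i - cvec i))
    (g : EuclideanSpace ℝ (Fin dy) → EuclideanSpace ℝ (Fin dl) → ℝ)
    (Lg : ℝ)
    (hgC1 : ContDiff ℝ 1
      (fun p : EuclideanSpace ℝ (Fin dy) × EuclideanSpace ℝ (Fin dl) => g p.1 p.2))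
    (hgLip : ∀ y y' l l',
      ‖gradient (fun y0 => g y0 l) y - gradient (fun y0 => g y0 l') y'‖ ^ 2 +
        ‖gradient (fun l0 => g y l0) l - gradient (fun l0 => g y' l0) l'‖ ^ 2 ≤
        Lg ^ 2 * (‖y - y'‖ ^ 2 + ‖l - l'‖ ^ 2))
    (hgconv : ∀ l ∈ Lam, ConvexOn ℝ univ (fun y => g y l))
    (vg : EuclideanSpace ℝ (Fin dl) → ℝ)
    (hvg : ∀ l, vg l = sInf ((fun z => g z l) '' Yset))
    (hg : EuclideanSpace ℝ (Fin dy) → EuclideanSpace ℝ (Fin dl) → ℝ)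
    (hhg : ∀ y l, hg y l = g y l - vg l)
    (P : EuclideanSpace ℝ (Fin dx) → EuclideanSpace ℝ (Fin dy) →
      EuclideanSpace ℝ (Fin dl) → EuclideanSpace ℝ (Fin dy) → ℝ)
    (ρ : ℝ) (hρ : 0 < ρ)
    (hPdef : ∀ x y l z, P x y l z = f x y l - ρ * (g y l - g z l))
    (F : EuclideanSpace ℝ (Fin dx) → ℝ)
    (hF : ∀ x, F x = sSup
      ((fun p : EuclideanSpace ℝ (Fin dy) × EuclideanSpace ℝ (Fin dl) =>
        f x p.1 p.2 - ρ * hg p.1 p.2) '' (Yset ×ˢ Lam)))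
    (Φ : EuclideanSpace ℝ (Fin dx) → ℝ)
    (hΦ : ∀ x, Φ x = sSup
      ((fun p : EuclideanSpace ℝ (Fin dy) × EuclideanSpace ℝ (Fin dl) =>
        f x p.1 p.2) '' {p ∈ Yset ×ˢ Lam | hg p.1 p.2 = 0}))
    (ΦStar : ℝ) (hΦStar : ΦStar = sInf (Φ '' Xset))
    (FStar : ℝ) (hFStar : FStar = sInf (F '' Xset))
    (δ : EuclideanSpace ℝ (Fin dx) → ℝ) (hδ : ∀ x, δ x = |F x - Φ x|)
    (ε : ℝ) (hε : 0 < ε)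
    (xe : EuclideanSpace ℝ (Fin dx)) (ye : EuclideanSpace ℝ (Fin dy))
    (le : EuclideanSpace ℝ (Fin dl)) (ze : EuclideanSpace ℝ (Fin dy))
    (hxe : xe ∈ Xset) (hye : ye ∈ Yset) (hle : le ∈ Lam) (hze : ze ∈ Yset)
    (hopt1 : P xe ye le ze - sInf ((fun z => P xe ye le z) '' Yset) ≤ ε)
    (hopt2 : sSup ((fun p : EuclideanSpace ℝ (Fin dy) × EuclideanSpace ℝ (Fin dl) =>
      sInf ((fun z => P xe p.1 p.2 z) '' Yset)) '' (Yset ×ˢ Lam)) - P xe ye le ze ≤ ε)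
    (hopt3 : P xe ye le ze - FStar ≤ ε)
    :
    Φ xe ≤ FStar + 2 * ε + δ xe ∧ f xe ye le ≥ ΦStar - 2 * ε - δ xe := by

  classical
  -- continuity of g in its first argument
  have hgcont := hgC1.continuous
  have hgl : ∀ l : EuclideanSpace ℝ (Fin dl), Continuous (fun z => g z l) := by
    intro l
    exact hgcont.comp (continuous_id.prodMk continuous_const)
  -- minimizers of g(·,l) on Yset
  have hmin : ∀ l : EuclideanSpace ℝ (Fin dl), ∃ z0 ∈ Yset,
      (∀ z ∈ Yset, g z0 l ≤ g z l) ∧ vg l = g z0 l := by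
    intro l
    obtain ⟨z0, hz0, hz0min⟩ := hYcp.exists_isMinOn hYne ((hgl l).continuousOn)
    refine ⟨z0, hz0, fun z hz => hz0min hz, ?_⟩
    rw [hvg]
    exact IsLeast.csInf_eq ⟨⟨z0, hz0, rfl⟩, by rintro a ⟨z, hz, rfl⟩; exact hz0min hz⟩
  -- the inner infimum of P equals f - ρ * hg
  have hInfP : ∀ y l, sInf ((fun z => P xe y l z) '' Yset) = f xe y l - ρ * hg y l := by
    intro y l
    obtain ⟨z0, hz0Y, hz0min, hz0v⟩ := hmin l
    have : IsLeast ((fun z => P xe y l z) '' Yset) (f xe y l - ρ * hg y l) := by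
      constructor
      · refine ⟨z0, hz0Y, ?_⟩
        show P xe y l z0 = f xe y l - ρ * hg y l
        rw [hPdef, hhg, hz0v]
      · rintro a ⟨z, hz, rfl⟩
        show f xe y l - ρ * hg y l ≤ P xe y l z
        rw [hPdef, hhg, hz0v]
        have := hz0min z hz
        nlinarith
    exact this.csInf_eq
  -- the sup in hopt2 equals F xe
  have himg : ((fun p : EuclideanSpace ℝ (Fin dy) × EuclideanSpace ℝ (Fin dl) =>
      sInf ((fun z => P xe p.1 p.2 z) '' Yset)) '' (Yset ×ˢ Lam)) =
      ((fun p : EuclideanSpace ℝ (Fin dy) × EuclideanSpace ℝ (Fin dl) =>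
        f xe p.1 p.2 - ρ * hg p.1 p.2) '' (Yset ×ˢ Lam)) :=
    Set.image_congr (fun p _ => hInfP p.1 p.2)
  have hFxe : sSup ((fun p : EuclideanSpace ℝ (Fin dy) × EuclideanSpace ℝ (Fin dl) =>
      sInf ((fun z => P xe p.1 p.2 z) '' Yset)) '' (Yset ×ˢ Lam)) = F xe := by
    rw [himg, hF]
  rw [hFxe] at hopt2
  -- abs bounds
  have habs1 : Φ xe - F xe ≤ δ xe := by
    rw [hδ]
    have := neg_abs_le (F xe - Φ xe)
    linarith
  have habs2 : F xe - Φ xe ≤ δ xe := by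
    rw [hδ]; exact le_abs_self _
  constructor
  · -- first bound
    linarith
  · -- second bound : f xe ye le ≥ ΦStar - 2ε - δ xe
    obtain ⟨z0e, hz0eY, hz0emin, hz0ev⟩ := hmin le
    have hhg_nonneg : 0 ≤ hg ye le := by
      rw [hhg, hz0ev]
      have := hz0emin ye hye
      linarith
    -- from hopt1
    rw [hInfP ye le] at hopt1
    have hP : P xe ye le ze = f xe ye le - ρ * (g ye le - g ze le) := hPdef _ _ _ _
    have hhge : hg ye le = g ye le - g z0e le := by rw [hhg, hz0ev]
    have hf_ge_F : f xe ye le ≥ F xe - 2 * ε := by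
      have h1 : ρ * (g ze le - g z0e le) ≤ ε := by
        rw [hP, hhge] at hopt1; nlinarith
      have h2 : 0 ≤ ρ * (g ye le - g z0e le) := by
        rw [hhge] at hhg_nonneg
        exact mul_nonneg hρ.le hhg_nonneg
      rw [hP] at hopt2
      nlinarith
    -- Φ xe ≥ ΦStar
    -- feasible point (z0, l0)
    obtain ⟨l0, hl0⟩ := hLne
    obtain ⟨z0, hz0Y, hz0min, hz0v⟩ := hmin l0
    have hz0feas : (z0, l0) ∈ {p ∈ Yset ×ˢ Lam |
        hg p.1 p.2 = 0} := by
      refine ⟨⟨hz0Y, hl0⟩, ?_⟩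
      rw [hhg, hz0v]; ring
    -- continuity of f
    have hfbarcont := hfbarC1.continuous
    have hfc : Continuous (fun q : EuclideanSpace ℝ (Fin dx) ×
        EuclideanSpace ℝ (Fin dy) × EuclideanSpace ℝ (Fin dl) => f q.1 q.2.1 q.2.2) := by
      have : (fun q : EuclideanSpace ℝ (Fin dx) ×
          EuclideanSpace ℝ (Fin dy) × EuclideanSpace ℝ (Fin dl) => f q.1 q.2.1 q.2.2) =
          fun q => fbar q.1 q.2.1 + ∑ i, q.2.2 i *
            (A.mulVec (fun j => q.1 j) i + B.mulVec (fun j => q.2.1 j) i - cvec i) := by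
        funext q; exact hfdef q.1 q.2.1 q.2.2
      rw [this]
      refine Continuous.add ?_ ?_
      · exact hfbarcont.comp (continuous_fst.prodMk (continuous_snd.fst))
      · refine continuous_finset_sum _ (fun i _ => ?_)
        refine Continuous.mul ?_ ?_
        · exact (continuous_apply i).comp ((PiLp.continuous_ofLp 2 _).comp continuous_snd.snd)
        · refine Continuous.sub (Continuous.add ?_ ?_) continuous_const
          · simp only [Matrix.mulVec, dotProduct]
            refine continuous_finset_sum _ (fun j _ => ?_)
            exact continuous_const.mul ((continuous_apply j).comp ((PiLp.continuous_ofLp 2 _).comp continuous_fst))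
          · simp only [Matrix.mulVec, dotProduct]
            refine continuous_finset_sum _ (fun j _ => ?_)
            exact continuous_const.mul ((continuous_apply j).comp ((PiLp.continuous_ofLp 2 _).comp continuous_snd.fst))
    have hΦ_ge : ∀ x ∈ Xset, f x z0 l0 ≤ Φ x := by
      intro x hx
      rw [hΦ]
      refine le_csSup ?_ ⟨(z0, l0), hz0feas, rfl⟩
      -- bdd above: image of a subset of the compact Yset ×ˢ Lam under a continuous map
      have hc : Continuous (fun p : EuclideanSpace ℝ (Fin dy) ×
          EuclideanSpace ℝ (Fin dl) => f x p.1 p.2) :=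
        hfc.comp (continuous_const.prodMk continuous_id)
      have hcomp : IsCompact ((fun p : EuclideanSpace ℝ (Fin dy) ×
          EuclideanSpace ℝ (Fin dl) => f x p.1 p.2) '' (Yset ×ˢ Lam)) :=
        (hYcp.prod hLcp).image hc
      exact hcomp.bddAbove.mono (Set.image_mono (Set.sep_subset _ _))
    have hcx : Continuous (fun x => f x z0 l0) := by
      have hpair : Continuous fun x : EuclideanSpace ℝ (Fin dx) =>
          (x, ((z0, l0) : EuclideanSpace ℝ (Fin dy) × EuclideanSpace ℝ (Fin dl))) :=
        continuous_id.prodMk continuous_const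
      exact hfc.comp hpair
    obtain ⟨x0, hx0X, hx0min⟩ := hXcp.exists_isMinOn hXne hcx.continuousOn
    have hbdd : BddBelow (Φ '' Xset) := by
      refine ⟨f x0 z0 l0, ?_⟩
      rintro a ⟨x, hx, rfl⟩
      exact le_trans (hx0min hx) (hΦ_ge x hx)
    have hΦxe : ΦStar ≤ Φ xe := by
      rw [hΦStar]
      exact csInf_le hbdd ⟨xe, hxe, rfl⟩
    linarith
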